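/- Let F be a finite field, d ≥ 2, and let Q ∈ F[X₁,…,X_d] be a homogeneous polynomial of degree at most 2 (possibly zero). Then the number of points x ∈ F^d with Q(x) = 0 is at least |F|^{d−2}. -/

import Mathlib

open Finset MvPolynomial

namespace Stmt10

open scoped Classical

set_option linter.unusedSectionVars false
set_option maxHeartbeats 1600000

variable {F : Type*} [Field F] [Fintype F]

/-- The quadratic function attached to a coefficient matrix. -/
def qf {d : ℕ} (c : Fin d → Fin d → F) (x : Fin d → F) : F := ∑ i, ∑ j, c i j * x i * x j

/-- The associated polar (bilinear) function. -/
def bf {d : ℕ} (c : Fin d → Fin d → F) (x y : Fin d → F) : F :=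
  ∑ i, ∑ j, c i j * (x i * y j + y i * x j)

lemma qf_line {d : ℕ} (c : Fin d → Fin d → F) (x v : Fin d → F) (t : F) :
    qf c (x + t • v) = qf c x + t * bf c x v + t ^ 2 * qf c v := by
  simp only [qf, bf, Finset.mul_sum, ← Finset.sum_add_distrib]
  refine Finset.sum_congr rfl fun i _ => Finset.sum_congr rfl fun j _ => ?_
  simp only [Pi.add_apply, Pi.smul_apply, smul_eq_mul]
  ring

lemma bf_add_left {d : ℕ} (c : Fin d → Fin d → F) (x y v : Fin d → F) :
    bf c (x + y) v = bf c x v + bf c y v := by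
  simp only [bf, ← Finset.sum_add_distrib]
  refine Finset.sum_congr rfl fun i _ => Finset.sum_congr rfl fun j _ => ?_
  simp only [Pi.add_apply]
  ring

lemma bf_smul_left {d : ℕ} (c : Fin d → Fin d → F) (t : F) (x v : Fin d → F) :
    bf c (t • x) v = t * bf c x v := by
  simp only [bf, Finset.mul_sum]
  refine Finset.sum_congr rfl fun i _ => Finset.sum_congr rfl fun j _ => ?_
  simp only [Pi.smul_apply, smul_eq_mul]
  ring

lemma qf_c_add {d : ℕ} (c₁ c₂ : Fin d → Fin d → F) (x : Fin d → F) :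
    qf (c₁ + c₂) x = qf c₁ x + qf c₂ x := by
  simp only [qf, ← Finset.sum_add_distrib]
  refine Finset.sum_congr rfl fun i _ => Finset.sum_congr rfl fun j _ => ?_
  simp only [Pi.add_apply]
  ring

/-- Chevalley–Warning: in at least 3 variables, a quadratic form has a nontrivial zero. -/
lemma exists_isotropic {D : ℕ} (hD : 3 ≤ D) (c : Fin D → Fin D → F) :
    ∃ v : Fin D → F, v ≠ 0 ∧ qf c v = 0 := by
  set P : MvPolynomial (Fin D) F := ∑ i : Fin D, ∑ j : Fin D, (C (c i j) * X i * X j) with hP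
  have hev : ∀ x, eval x P = qf c x := by
    intro x
    simp [hP, qf, map_sum]
  have hdeg : P.totalDegree < Fintype.card (Fin D) := by
    have h2 : P.totalDegree ≤ 2 := by
      refine (totalDegree_finset_sum _ _).trans ?_
      refine Finset.sup_le fun i _ => ?_
      refine (totalDegree_finset_sum _ _).trans ?_
      refine Finset.sup_le fun j _ => ?_
      calc (C (c i j) * X i * X j).totalDegree
          ≤ (C (c i j) * X i).totalDegree + (X j : MvPolynomial (Fin D) F).totalDegree :=
            totalDegree_mul _ _
        _ ≤ ((C (c i j) : MvPolynomial (Fin D) F).totalDegree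
              + (X i : MvPolynomial (Fin D) F).totalDegree)
              + (X j : MvPolynomial (Fin D) F).totalDegree :=
            Nat.add_le_add_right (totalDegree_mul _ _) _
        _ ≤ 2 := by simp [totalDegree_C, totalDegree_X]
    rw [Fintype.card_fin]
    omega
  obtain ⟨p, hpc⟩ := CharP.exists F
  have hp : p.Prime := CharP.char_is_prime F p
  have hdvd : p ∣ Fintype.card { x : Fin D → F // eval x P = 0 } :=
    char_dvd_card_solutions p hdeg
  have h0 : (eval (0 : Fin D → F)) P = 0 := by rw [hev]; simp [qf]
  have hpos : 0 < Fintype.card { x : Fin D → F // eval x P = 0 } :=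
    Fintype.card_pos_iff.mpr ⟨⟨0, h0⟩⟩
  have hcard : 1 < Fintype.card { x : Fin D → F // eval x P = 0 } :=
    lt_of_lt_of_le hp.one_lt (Nat.le_of_dvd hpos hdvd)
  obtain ⟨v, hv⟩ := Fintype.exists_ne_of_one_lt_card hcard ⟨0, h0⟩
  refine ⟨v.1, fun h => hv (Subtype.ext h), ?_⟩
  rw [← hev]; exact v.2

/-- Case where the polar form along the isotropic direction is nonzero somewhere. -/
lemma caseA1 {D : ℕ} (hD : 2 ≤ D) (c : Fin D → Fin D → F) (v : Fin D → F)
    (hv : qf c v = 0) (w : Fin D → F) (hw : bf c w v ≠ 0) :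
    Fintype.card F ^ (D - 2) ≤ (univ.filter fun x : Fin D → F => qf c x = 0).card := by
  set q := Fintype.card F with hq
  have hq2 : 2 ≤ q := Fintype.one_lt_card
  set Λ : (Fin D → F) →ₗ[F] F :=
    { toFun := fun x => bf c x v
      map_add' := fun x y => bf_add_left c x y v
      map_smul' := fun t x => by simpa using bf_smul_left c t x v } with hΛ
  have hΛapp : ∀ x, Λ x = bf c x v := fun _ => rfl
  have hsurj : Function.Surjective Λ := by
    intro r
    refine ⟨(r / bf c w v) • w, ?_⟩
    rw [hΛapp, bf_smul_left, div_mul_cancel₀ _ hw]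
  have h1 : Module.finrank F (LinearMap.range Λ) = 1 := by
    rw [LinearMap.range_eq_top.mpr hsurj, finrank_top, Module.finrank_self]
  have h2 := LinearMap.finrank_range_add_finrank_ker Λ
  rw [h1, Module.finrank_pi, Fintype.card_fin] at h2
  have hker : Module.finrank F (LinearMap.ker Λ) = D - 1 := by omega
  have hcardker : Fintype.card (LinearMap.ker Λ) = q ^ (D - 1) := by
    rw [Module.card_eq_pow_finrank (K := F), hker]
  have hkf : (univ.filter fun x : Fin D → F => bf c x v = 0).card = q ^ (D - 1) := by
    rw [← hcardker]
    rw [show (Fintype.card (LinearMap.ker Λ))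
        = Fintype.card {x : Fin D → F // bf c x v = 0} from
      Fintype.card_congr (Equiv.subtypeEquivRight fun x => by
        rw [LinearMap.mem_ker, hΛapp])]
    rw [Fintype.card_subtype]
  set s : Finset (Fin D → F) := univ.filter fun x => bf c x v ≠ 0 with hs
  have hsplit := Finset.card_filter_add_card_filter_not
    (s := (univ : Finset (Fin D → F))) (p := fun x => bf c x v = 0)
  have huniv : (univ : Finset (Fin D → F)).card = q ^ D := by
    rw [Finset.card_univ, Fintype.card_fun, Fintype.card_fin]
  have hscard : s.card = q ^ D - q ^ (D - 1) := by
    have : s = univ.filter fun x : Fin D → F => ¬(bf c x v = 0) := rfl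
    rw [this]
    omega
  set Φ : (Fin D → F) → (Fin D → F) := fun x => x + (-(qf c x) / (bf c x v)) • v with hΦ
  have himg : ∀ a ∈ s.image Φ, qf c a = 0 := by
    intro a ha
    obtain ⟨x, hx, rfl⟩ := Finset.mem_image.mp ha
    have hbx : bf c x v ≠ 0 := (Finset.mem_filter.mp hx).2
    show qf c (x + (-(qf c x) / (bf c x v)) • v) = 0
    rw [qf_line, hv, mul_zero, add_zero, div_mul_cancel₀ _ hbx]
    ring
  have hfib : ∀ a ∈ s.image Φ, (s.filter fun x => Φ x = a).card ≤ q := by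
    intro a _
    have hsub : s.filter (fun x => Φ x = a) ⊆
        (univ : Finset F).image (fun t => a + t • v) := by
      intro x hx
      obtain ⟨_, hxa⟩ := Finset.mem_filter.mp hx
      refine Finset.mem_image.mpr ⟨-((-(qf c x)) / (bf c x v)), Finset.mem_univ _, ?_⟩
      have hxa' : x + ((-(qf c x)) / (bf c x v)) • v = a := hxa
      rw [← hxa', neg_smul]
      abel
    calc (s.filter fun x => Φ x = a).card
        ≤ ((univ : Finset F).image fun t => a + t • v).card := Finset.card_le_card hsub
      _ ≤ (univ : Finset F).card := Finset.card_image_le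
      _ = q := Finset.card_univ
  have hcount : s.card ≤ q * (s.image Φ).card := Finset.card_le_mul_card_image s q hfib
  have himg2 : s.image Φ ⊆ univ.filter fun x => qf c x = 0 := fun a ha =>
    Finset.mem_filter.mpr ⟨Finset.mem_univ _, himg a ha⟩
  have hZ : s.card ≤ q * (univ.filter fun x : Fin D → F => qf c x = 0).card :=
    hcount.trans (Nat.mul_le_mul_left q (Finset.card_le_card himg2))
  have hpow : q ^ D = q * q ^ (D - 1) := by
    conv_lhs => rw [show D = (D - 1) + 1 by omega]
    rw [pow_succ, mul_comm]
  have hpow2 : q ^ (D - 1) = q * q ^ (D - 2) := by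
    conv_lhs => rw [show D - 1 = (D - 2) + 1 by omega]
    rw [pow_succ, mul_comm]
  have hbig : q ^ (D - 1) ≤ s.card := by
    have h2A : 2 * q ^ (D - 1) ≤ q ^ D := by
      rw [hpow]; exact Nat.mul_le_mul_right _ hq2
    omega
  have : q * q ^ (D - 2) ≤ q * (univ.filter fun x : Fin D → F => qf c x = 0).card := by
    rw [← hpow2]; exact hbig.trans hZ
  exact Nat.le_of_mul_le_mul_left this (by omega)

/-- Case where the polar form along the isotropic direction vanishes identically. -/
lemma caseA2 {d : ℕ} (hd : 2 ≤ d) (c : Fin (d+1) → Fin (d+1) → F) (v : Fin (d+1) → F)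
    (hv : qf c v = 0) (hL : ∀ x, bf c x v = 0) (i0 : Fin (d+1)) (hi0 : v i0 ≠ 0)
    (ih : ∀ c' : Fin d → Fin d → F,
      Fintype.card F ^ (d - 2) ≤ (univ.filter fun y : Fin d → F => qf c' y = 0).card) :
    Fintype.card F ^ (d + 1 - 2) ≤ (univ.filter fun x : Fin (d+1) → F => qf c x = 0).card := by
  set q := Fintype.card F with hq
  set c' : Fin d → Fin d → F := fun i j => c (i0.succAbove i) (i0.succAbove j) with hc'
  have key : ∀ y : Fin d → F, qf c (i0.insertNth 0 y) = qf c' y := by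
    intro y
    set z : Fin (d+1) → F := i0.insertNth 0 y with hz
    have hz0 : z i0 = 0 := by rw [hz]; simp
    have hzs : ∀ j, z (i0.succAbove j) = y j := by intro j; rw [hz]; simp
    show (∑ i, ∑ j, c i j * z i * z j) = qf c' y
    rw [Fin.sum_univ_succAbove (fun i => ∑ j, c i j * z i * z j) i0]
    have hfirst : (∑ j, c i0 j * z i0 * z j) = 0 := by
      simp [hz0]
    rw [hfirst, zero_add]
    refine Finset.sum_congr rfl fun i _ => ?_
    rw [Fin.sum_univ_succAbove (fun j => c (i0.succAbove i) j * z (i0.succAbove i) * z j) i0]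
    simp [hz0, hzs, qf, hc']
  set Ψ : F × (Fin d → F) → (Fin (d+1) → F) := fun p => i0.insertNth 0 p.2 + p.1 • v with hΨ
  have hmaps : ∀ p ∈ (univ : Finset F) ×ˢ (univ.filter fun y : Fin d → F => qf c' y = 0),
      Ψ p ∈ univ.filter fun x : Fin (d+1) → F => qf c x = 0 := by
    rintro ⟨t, y⟩ hp
    rw [Finset.mem_product, Finset.mem_filter] at hp
    have hy : qf c' y = 0 := hp.2.2
    refine Finset.mem_filter.mpr ⟨Finset.mem_univ _, ?_⟩
    simp only [hΨ]
    rw [qf_line, hL, hv, key, hy]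
    ring
  have hinj : Set.InjOn Ψ ↑((univ : Finset F) ×ˢ (univ.filter fun y : Fin d → F => qf c' y = 0)) := by
    rintro ⟨t, y⟩ _ ⟨t', y'⟩ _ h
    simp only [hΨ] at h
    have h0 := congrFun h i0
    simp only [Pi.add_apply, Pi.smul_apply, smul_eq_mul,
      Fin.insertNth_apply_same] at h0
    have ht : t = t' := by
      exact mul_right_cancel₀ hi0 (by simpa using h0)
    subst ht
    have hy : y = y' := by
      funext j
      have hj := congrFun h (i0.succAbove j)
      simp only [Pi.add_apply, Pi.smul_apply, smul_eq_mul,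
        Fin.insertNth_apply_succAbove] at hj
      exact add_right_cancel hj
    rw [hy]
  have hcard := Finset.card_le_card_of_injOn Ψ hmaps hinj
  rw [Finset.card_product, Finset.card_univ] at hcard
  have : q ^ (d + 1 - 2) ≤ q * (univ.filter fun y : Fin d → F => qf c' y = 0).card := by
    have h1 : d + 1 - 2 = (d - 2) + 1 := by omega
    rw [h1, pow_succ, mul_comm]
    exact Nat.mul_le_mul_left q (ih c')
  exact this.trans hcard

/-- Main counting lemma, for explicit quadratic functions. -/
lemma main : ∀ D : ℕ, 2 ≤ D → ∀ c : Fin D → Fin D → F,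
    Fintype.card F ^ (D - 2) ≤ (univ.filter fun x : Fin D → F => qf c x = 0).card := by
  intro D hD
  induction D, hD using Nat.le_induction with
  | base =>
    intro c
    have h0 : (0 : Fin 2 → F) ∈ univ.filter fun x : Fin 2 → F => qf c x = 0 :=
      Finset.mem_filter.mpr ⟨Finset.mem_univ _, by simp [qf]⟩
    simpa using Finset.card_pos.mpr ⟨0, h0⟩
  | succ d hd ih =>
    intro c
    obtain ⟨v, hv0, hv⟩ := exists_isotropic (by omega) c
    by_cases hL : ∀ x, bf c x v = 0
    · obtain ⟨i0, hi0⟩ := Function.ne_iff.mp hv0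
      have hi0' : v i0 ≠ 0 := by simpa using hi0
      exact caseA2 hd c v hv hL i0 hi0' ih
    · push_neg at hL
      obtain ⟨w, hw⟩ := hL
      exact caseA1 (by omega) c v hv w hw

/-- Representation of a homogeneous quadratic polynomial by a coefficient matrix. -/
lemma sum_repr {D : ℕ} (s : Finset ((Fin D) →₀ ℕ)) (f : ((Fin D) →₀ ℕ) → MvPolynomial (Fin D) F)
    (h : ∀ m ∈ s, ∃ c : Fin D → Fin D → F, ∀ x, eval x (f m) = qf c x) :
    ∃ c : Fin D → Fin D → F, ∀ x, eval x (∑ m ∈ s, f m) = qf c x := by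
  induction s using Finset.cons_induction with
  | empty => exact ⟨0, fun x => by simp [qf]⟩
  | cons m s hms ih =>
    obtain ⟨c₁, h₁⟩ := h m (Finset.mem_cons_self _ _)
    obtain ⟨c₂, h₂⟩ := ih fun m' hm' => h m' (Finset.mem_cons.mpr (Or.inr hm'))
    refine ⟨c₁ + c₂, fun x => ?_⟩
    rw [Finset.sum_cons, map_add, h₁ x, h₂ x, qf_c_add]

lemma monomial_repr {D : ℕ} (m : (Fin D) →₀ ℕ) (hm : m.degree = 2) (r : F) :
    ∃ c : Fin D → Fin D → F, ∀ x, eval x (monomial m r) = qf c x := by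
  have hcard : Multiset.card m.toMultiset = 2 := by
    rw [Finsupp.card_toMultiset]
    simpa [Finsupp.degree_apply, Finsupp.sum] using hm
  obtain ⟨a, b, hab⟩ := Multiset.card_eq_two.mp hcard
  have hm2 : m = Finsupp.single a 1 + Finsupp.single b 1 := by
    have := congrArg Multiset.toFinsupp hab
    rw [Finsupp.toMultiset_toFinsupp] at this
    rw [this]
    rw [show ({a, b} : Multiset (Fin D)) = {a} + {b} by rfl]
    rw [Multiset.toFinsupp_add, Multiset.toFinsupp_singleton, Multiset.toFinsupp_singleton]
  have hev : ∀ x : Fin D → F, eval x (monomial m r) = r * x a * x b := by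
    intro x
    rw [eval_monomial, hm2]
    rw [Finsupp.prod_add_index (by intro i _; exact pow_zero _)
      (by intro i _ k l; exact pow_add _ _ _)]
    rw [Finsupp.prod_single_index (h := fun n e => x n ^ e) (pow_zero _),
      Finsupp.prod_single_index (h := fun n e => x n ^ e) (pow_zero _)]
    ring
  refine ⟨fun i j => if i = a ∧ j = b then r else 0, fun x => ?_⟩
  rw [hev x]
  rw [qf, Finset.sum_eq_single a]
  · rw [Finset.sum_eq_single b]
    · simp
    · intro j _ hj; simp [hj]
    · simp
  · intro i _ hi
    exact Finset.sum_eq_zero fun j _ => by simp [hi]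
  · simp

lemma exists_repr {D : ℕ} (Q : MvPolynomial (Fin D) F) (hQ : Q.IsHomogeneous 2) :
    ∃ c : Fin D → Fin D → F, ∀ x, eval x Q = qf c x := by
  obtain ⟨c, hc⟩ := sum_repr Q.support (fun m => monomial m (coeff m Q)) (by
    intro m hm
    refine monomial_repr m ?_ _
    have := hQ (mem_support_iff.mp hm)
    rw [Finsupp.degree_eq_weight_one]
    exact this)
  refine ⟨c, fun x => ?_⟩
  conv_lhs => rw [← support_sum_monomial_coeff Q]
  exact hc x

end Stmt10

/-- Let `F` be a finite field, `d ≥ 2`, and `Q ∈ F[X₁,…,X_d]` a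
homogeneous polynomial of degree 2 (possibly zero). Then the number of points
`x ∈ F^d` with `Q(x) = 0` is at least `|F|^{d-2}`. -/
theorem stmt_10 (F : Type*) [Field F] [Fintype F] (d : ℕ) (hd : 2 ≤ d)
    (Q : MvPolynomial (Fin d) F) (hQ : Q.IsHomogeneous 2) :
    Fintype.card F ^ (d - 2) ≤ {x : Fin d → F | MvPolynomial.eval x Q = 0}.ncard := by
  obtain ⟨c, hc⟩ := Stmt10.exists_repr Q hQ
  refine le_trans (Stmt10.main d hd c) (le_of_eq ?_)
  rw [← Set.ncard_coe_finset]
  congr 1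
  ext x
  simp [hc x]
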